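/- Let G be a nontrivial finite group in which every commutator has prime power order (a CPPO-group), and suppose the soluble radical of G is trivial. Then G is almost simple: G has a normal subgroup S that is a nonabelian simple group and satisfies C_G(S) = 1. -/

import Mathlib

namespace CPPO14

universe u

variable {G : Type u} [Group G]

lemma commute_of_commutator_eq_one {a b : G} (h : a⁻¹ * b⁻¹ * a * b = 1) :
    a * b = b * a := by
  have h1 : a * (a⁻¹ * b⁻¹ * a * b) = a * 1 := congrArg _ h
  rw [mul_one] at h1
  have h2 : b⁻¹ * (a * b) = a := by simpa [mul_assoc] using h1
  have h3 : b * (b⁻¹ * (a * b)) = b * a := congrArg _ h2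
  simpa [mul_assoc] using h3

lemma prime_eq_of_pow_dvd_pow {p q i t : ℕ} (hp : p.Prime) (hq : q.Prime)
    (hi : i ≠ 0) (h : p ^ i ∣ q ^ t) : p = q := by
  have h1 : p ∣ q ^ t := dvd_trans (dvd_pow_self p hi) h
  exact (Nat.prime_dvd_prime_iff_eq hp hq).mp (hp.dvd_of_dvd_pow h1)

lemma exists_pow_of_all_primes {n p : ℕ} (hn : n ≠ 0) (hp : p.Prime)
    (h : ∀ q, q.Prime → q ∣ n → q = p) : ∃ k, n = p ^ k := by
  refine ⟨n.factorization p, ?_⟩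
  have h0 := Nat.ordProj_mul_ordCompl_eq_self n p
  by_cases h1 : n / p ^ n.factorization p = 1
  · conv_lhs => rw [← h0]
    rw [h1, mul_one]
  · exfalso
    obtain ⟨q, hq, hqdvd⟩ := Nat.exists_prime_and_dvd h1
    have hqn : q ∣ n := hqdvd.trans (Nat.ordCompl_dvd n p)
    have hqp := h q hq hqn
    subst hqp
    exact (Nat.not_dvd_ordCompl hp hn) hqdvd

lemma exists_minimal {α : Type*} (P : α → Prop) (f : α → ℕ) (h : ∃ a, P a) :
    ∃ a, P a ∧ ∀ b, P b → f a ≤ f b := by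
  obtain ⟨a0, ha0⟩ := h
  obtain ⟨n, ⟨a, ha, rfl⟩, hmin⟩ := (wellFounded_lt (α := ℕ)).has_min
    {n | ∃ a, P a ∧ f a = n} ⟨f a0, a0, ha0, rfl⟩
  exact ⟨a, ha, fun b hb => not_lt.mp (hmin (f b) ⟨b, hb, rfl⟩)⟩

section Conj

open Subgroup

/-- Conjugate of a subgroup. -/
def cjg (g : G) (T : Subgroup G) : Subgroup G :=
  T.map (MulAut.conj g).toMonoidHom

lemma mem_cjg {g x : G} {T : Subgroup G} :
    x ∈ cjg g T ↔ ∃ t ∈ T, g * t * g⁻¹ = x := by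
  simp [cjg, Subgroup.mem_map, MulAut.conj_apply]

lemma cjg_one (T : Subgroup G) : cjg (1 : G) T = T := by
  ext x
  simp [mem_cjg]

lemma cjg_cjg (g h : G) (T : Subgroup G) : cjg g (cjg h T) = cjg (g * h) T := by
  show (T.map _).map _ = T.map _
  rw [Subgroup.map_map]
  congr 1
  ext x
  simp [MulAut.conj_apply, mul_assoc]

lemma card_cjg (g : G) (T : Subgroup G) : Nat.card (cjg g T) = Nat.card T :=
  (Nat.card_congr (T.equivMapOfInjective (MulAut.conj g).toMonoidHom
    (MulAut.conj g).injective).toEquiv).symm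

lemma cjg_ne_bot [Finite G] {T : Subgroup G} (h : T ≠ ⊥) (g : G) : cjg g T ≠ ⊥ := by
  have h1 : 1 < Nat.card T := (Subgroup.one_lt_card_iff_ne_bot T).mpr h
  rw [← card_cjg g T] at h1
  exact (Subgroup.one_lt_card_iff_ne_bot (cjg g T)).mp h1

lemma solvable_cjg (g : G) (T : Subgroup G) [Group.IsSolvable T] : IsSolvable (cjg g T) := by
  have e := T.equivMapOfInjective (MulAut.conj g).toMonoidHom (MulAut.conj g).injective
  exact solvable_of_surjective (f := e.toMonoidHom) e.surjective

end Conj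

section SolvSup

lemma solvable_sup (A B : Subgroup G) [hA : Group.IsSolvable A] [hB : Group.IsSolvable B]
    (h : ∀ x ∈ A, ∀ y ∈ B, x * y = y * x) : IsSolvable ((A ⊔ B : Subgroup G)) := by
  have com : ∀ (a : A) (b : B), Commute (A.subtype a) (B.subtype b) :=
    fun a b => h a a.2 b b.2
  let φ : A × B →* G := MonoidHom.noncommCoprod A.subtype B.subtype com
  have hrange : φ.range = A ⊔ B := by
    apply le_antisymm
    · rintro x ⟨⟨a, b⟩, rfl⟩
      exact Subgroup.mul_mem _ (Subgroup.mem_sup_left a.2) (Subgroup.mem_sup_right b.2)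
    · refine sup_le ?_ ?_
      · intro a ha
        exact ⟨(⟨a, ha⟩, 1), by simp [φ, MonoidHom.noncommCoprod_apply]⟩
      · intro b hb
        exact ⟨(1, ⟨b, hb⟩), by simp [φ, MonoidHom.noncommCoprod_apply]⟩
  have : IsSolvable φ.range := solvable_of_surjective φ.rangeRestrict_surjective
  rwa [hrange] at this

lemma solvable_finsetSup [DecidableEq (Subgroup G)] (s : Finset (Subgroup G))
    (hsol : ∀ K ∈ s, IsSolvable K)
    (hcomm : ∀ K ∈ s, ∀ L ∈ s, K ≠ L → ∀ x ∈ K, ∀ y ∈ L, x * y = y * x) :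
    Group.IsSolvable ((s.sup id : Subgroup G)) := by
  induction s using Finset.induction_on with
  | empty =>
    rw [Finset.sup_empty]
    infer_instance
  | insert K s' hK ih =>
    rw [Finset.sup_insert, id_eq]
    haveI hKs : Group.IsSolvable K := hsol K (Finset.mem_insert_self K s')
    haveI hs' : Group.IsSolvable ((s'.sup id : Subgroup G)) :=
      ih (fun L hL => hsol L (Finset.mem_insert_of_mem hL))
        (fun L hL M hM => hcomm L (Finset.mem_insert_of_mem hL) M (Finset.mem_insert_of_mem hM))
    apply solvable_sup
    intro x hx y hy
    have hle : s'.sup id ≤ Subgroup.centralizer (K : Set G) := by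
      refine Finset.sup_le ?_
      intro L hL z hz
      rw [Subgroup.mem_centralizer_iff]
      intro k hk
      exact hcomm K (Finset.mem_insert_self K s') L (Finset.mem_insert_of_mem hL)
        (fun h => hK (h ▸ hL)) k hk z hz
    exact Subgroup.mem_centralizer_iff.mp (hle hy) x hx

end SolvSup

section Key

open Subgroup

/-- A finite group in which every commutator has `p`-power order is solvable.
(Elementary proof via Burnside's normal complement theorem.) -/
lemma solvable_aux : ∀ (n : ℕ) (H : Type u) [Group H] [Finite H], Nat.card H = n →
    ∀ p : ℕ, p.Prime → (∀ x y : H, ∃ k : ℕ, orderOf (x⁻¹ * y⁻¹ * x * y) = p ^ k) →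
    Group.IsSolvable H := by
  intro n
  induction n using Nat.strong_induction_on with
  | _ n ih =>
    intro H _ _ hcard p hp h
    by_cases hsimp : ∀ N : Subgroup H, N.Normal → N = ⊥ ∨ N = ⊤
    · -- "simple-ish" case
      by_cases hpg : ∃ q : ℕ, q.Prime ∧ q ∣ Nat.card H ∧ q ≠ p
      · obtain ⟨q, hq, hqdvd, hqp⟩ := hpg
        haveI := Fact.mk hq
        obtain ⟨Q⟩ : Nonempty (Sylow q H) := inferInstance
        have hQcard : Nat.card Q = q ^ (Nat.card H).factorization q :=
          Sylow.card_eq_multiplicity Q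
        have hq1 : 0 < (Nat.card H).factorization q :=
          hq.factorization_pos_of_dvd Nat.card_pos.ne' hqdvd
        have hQ1 : 1 < Nat.card Q := by
          rw [hQcard]
          exact Nat.one_lt_pow hq1.ne' hq.one_lt
        have hnc : Subgroup.normalizer (Q : Set H) ≤ Subgroup.centralizer (Q : Set H) := by
          intro g hg
          rw [Subgroup.mem_centralizer_iff]
          intro a ha
          have haQ : a ∈ (Q : Subgroup H) := ha
          have h1 : g⁻¹ * a * g ∈ (Q : Subgroup H) :=
            (Subgroup.mem_normalizer_iff''.mp hg a).mp haQ
          have hu : a⁻¹ * g⁻¹ * a * g ∈ (Q : Subgroup H) := by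
            have := mul_mem (inv_mem haQ) h1
            simpa [mul_assoc] using this
          obtain ⟨k, hk⟩ := h a g
          have hdvd : orderOf (a⁻¹ * g⁻¹ * a * g) ∣ Nat.card (Q : Subgroup H) :=
            Subgroup.orderOf_dvd_natCard _ hu
          rw [hk, hQcard] at hdvd
          have hk0 : k = 0 := by
            by_contra hk0
            exact hqp.symm (prime_eq_of_pow_dvd_pow hp hq hk0 hdvd)
          rw [hk0, pow_zero, orderOf_eq_one_iff] at hk
          exact commute_of_commutator_eq_one hk
        have hcmpl := MonoidHom.ker_transferSylow_isComplement' Q hnc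
        have hcm := hcmpl.card_mul
        rcases hsimp (MonoidHom.transferSylow Q hnc).ker (MonoidHom.normal_ker (MonoidHom.transferSylow Q hnc)) with hker | hker
        · rw [hker, Subgroup.card_bot, one_mul] at hcm
          have hpgq : IsPGroup q H := IsPGroup.iff_card.mpr
            ⟨(Nat.card H).factorization q, by rw [← hQcard]; exact hcm.symm⟩
          haveI := hpgq.isNilpotent
          infer_instance
        · exfalso
          rw [hker, Subgroup.card_top] at hcm
          have : Nat.card H * Nat.card Q = Nat.card H * 1 := by simpa using hcm
          have h1 : Nat.card (Q : Subgroup H) = 1 :=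
            Nat.eq_of_mul_eq_mul_left Nat.card_pos this
          omega
      · -- p-group
        push_neg at hpg
        have hall : ∀ q, q.Prime → q ∣ Nat.card H → q = p := by
          intro q hq hqdvd
          by_contra hne
          exact hne (hpg q hq hqdvd)
        obtain ⟨k, hk⟩ := exists_pow_of_all_primes Nat.card_pos.ne' hp hall
        haveI := Fact.mk hp
        have hpgH : IsPGroup p H := IsPGroup.iff_card.mpr ⟨k, hk⟩
        haveI := hpgH.isNilpotent
        infer_instance
    · -- non-simple case
      push_neg at hsimp
      obtain ⟨N, hNnorm, hNbot, hNtop⟩ := hsimp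
      have hcardN : Nat.card N < n := by
        rw [← hcard]
        refine lt_of_le_of_ne N.card_le_card_group ?_
        intro hEq
        exact hNtop (Subgroup.eq_of_le_of_card_ge le_top
          (by rw [Subgroup.card_top]; exact hEq.ge))
      haveI hNsolv : Group.IsSolvable N := by
        refine ih _ hcardN N rfl p hp ?_
        intro x y
        obtain ⟨k, hk⟩ := h (x : H) (y : H)
        refine ⟨k, ?_⟩
        rw [← Subgroup.orderOf_coe]
        push_cast
        exact hk
      haveI : Finite (H ⧸ N) := Quotient.finite _
      have hcardQ : Nat.card (H ⧸ N) < n := by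
        rw [← hcard, Subgroup.card_eq_card_quotient_mul_card_subgroup N]
        have h2 : 1 < Nat.card N := (Subgroup.one_lt_card_iff_ne_bot N).mpr hNbot
        have h3 : 0 < Nat.card (H ⧸ N) := Nat.card_pos
        exact (Nat.lt_mul_iff_one_lt_right h3).mpr h2
      haveI hQsolv : Group.IsSolvable (H ⧸ N) := by
        refine ih _ hcardQ (H ⧸ N) rfl p hp ?_
        intro x' y'
        obtain ⟨x, rfl⟩ := QuotientGroup.mk'_surjective N x'
        obtain ⟨y, rfl⟩ := QuotientGroup.mk'_surjective N y'
        have hmap : (QuotientGroup.mk' N x)⁻¹ * (QuotientGroup.mk' N y)⁻¹ *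
            QuotientGroup.mk' N x * QuotientGroup.mk' N y =
            QuotientGroup.mk' N (x⁻¹ * y⁻¹ * x * y) := by
          simp [map_mul, map_inv]
        rw [hmap]
        obtain ⟨k, hk⟩ := h x y
        have hdvd : orderOf (QuotientGroup.mk' N (x⁻¹ * y⁻¹ * x * y)) ∣ p ^ k := by
          rw [← hk]
          exact orderOf_map_dvd _ _
        obtain ⟨j, _, hj⟩ := (Nat.dvd_prime_pow hp).mp hdvd
        exact ⟨j, hj⟩
      exact solvable_of_ker_le_range N.subtype (QuotientGroup.mk' N)
        (by rw [QuotientGroup.ker_mk', Subgroup.range_subtype])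

end Key

section Cross

open Subgroup

lemma cross {A B : Subgroup G}
    (hcomm : ∀ x ∈ A, ∀ y ∈ B, x * y = y * x) (hint : A ⊓ B = ⊥)
    (hCPPO : ∀ x y : G, ∃ p k : ℕ, p.Prime ∧ orderOf (x⁻¹ * y⁻¹ * x * y) = p ^ k)
    {c d : G} (hc : c ∈ B) (hd : d ∈ B) (hcd : ¬ c * d = d * c) :
    ∃ p : ℕ, p.Prime ∧ ∀ x y : A, ∃ k : ℕ, orderOf (x⁻¹ * y⁻¹ * x * y) = p ^ k := by
  obtain ⟨q, j, hq, hqj⟩ := hCPPO c d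
  refine ⟨q, hq, ?_⟩
  intro x y
  set C : B := ⟨c, hc⟩ with hC
  set D : B := ⟨d, hd⟩ with hD
  have hVcoe : ((C⁻¹ * D⁻¹ * C * D : B) : G) = c⁻¹ * d⁻¹ * c * d := rfl
  set V : B := C⁻¹ * D⁻¹ * C * D with hV
  have hVne : (V : G) ≠ 1 := fun h1 => hcd (commute_of_commutator_eq_one (hVcoe ▸ h1))
  have hVorder : orderOf (V : G) = q ^ j := by rw [hVcoe]; exact hqj
  have hj0 : j ≠ 0 := by
    intro hj
    rw [hj, pow_zero, orderOf_eq_one_iff] at hVorder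
    exact hVne hVorder
  set W : A := x⁻¹ * y⁻¹ * x * y with hW
  have com : ∀ (a : A) (b : B), Commute (A.subtype a) (B.subtype b) :=
    fun a b => hcomm a a.2 b b.2
  set φ : A × B →* G := MonoidHom.noncommCoprod A.subtype B.subtype com with hφ
  obtain ⟨r, t, hr, hrt⟩ := hCPPO (φ (x, C)) (φ (y, D))
  have key : (φ (x, C))⁻¹ * (φ (y, D))⁻¹ * φ (x, C) * φ (y, D) = (W : G) * (V : G) := by
    rw [← map_inv, ← map_inv, ← map_mul, ← map_mul, ← map_mul]
    rfl
  rw [key] at hrt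
  have hcWV : Commute (W : G) (V : G) := hcomm _ W.2 _ V.2
  have hpow : (W : G) ^ (r ^ t) * (V : G) ^ (r ^ t) = 1 := by
    rw [← Commute.mul_pow hcWV, ← hrt, pow_orderOf_eq_one]
  have hWm : (W : G) ^ (r ^ t) = 1 := by
    have hmem : (W : G) ^ (r ^ t) ∈ A ⊓ B := by
      refine Subgroup.mem_inf.mpr ⟨pow_mem W.2 _, ?_⟩
      have heq : (W : G) ^ (r ^ t) = (((V : G)) ^ (r ^ t))⁻¹ := by
        rw [eq_inv_iff_mul_eq_one]; exact hpow
      rw [heq]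
      exact inv_mem (pow_mem V.2 _)
    rwa [hint, Subgroup.mem_bot] at hmem
  have hVm : (V : G) ^ (r ^ t) = 1 := by rwa [hWm, one_mul] at hpow
  have hdV : orderOf (V : G) ∣ r ^ t := orderOf_dvd_of_pow_eq_one hVm
  have hdW : orderOf (W : G) ∣ r ^ t := orderOf_dvd_of_pow_eq_one hWm
  have hqr : q = r := by
    apply prime_eq_of_pow_dvd_pow hq hr hj0
    rw [← hVorder]
    exact hdV
  subst hqr
  obtain ⟨k, _, hk⟩ := (Nat.dvd_prime_pow hq).mp hdW
  refine ⟨k, ?_⟩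
  rw [← Subgroup.orderOf_coe]
  exact hk

end Cross

end CPPO14

/-- Let `G` be a nontrivial finite CPPO-group whose soluble radical is
trivial. Then `G` is almost simple: it has a nonabelian simple normal subgroup `S` with
trivial centralizer. -/
theorem almost_simple_of_cppo_trivial_radical
    (G : Type*) [Group G] [Finite G] [Nontrivial G]
    (hCPPO : ∀ x y : G, ∃ p k : ℕ, p.Prime ∧ orderOf (x⁻¹ * y⁻¹ * x * y) = p ^ k)
    (hrad : ∀ N : Subgroup G, N.Normal → IsSolvable N → N = ⊥) :
    ∃ S : Subgroup G, S.Normal ∧ IsSimpleGroup S ∧ (∃ a b : S, a * b ≠ b * a) ∧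
      Subgroup.centralizer (S : Set G) = ⊥ := by
  classical
  open CPPO14 in
  -- a minimal nontrivial normal subgroup
  have htop : (⊤ : Subgroup G).Normal ∧ (⊤ : Subgroup G) ≠ ⊥ := by
    refine ⟨inferInstance, ?_⟩
    intro h
    obtain ⟨x, hx⟩ := exists_ne (1 : G)
    have : x ∈ (⊥ : Subgroup G) := h ▸ Subgroup.mem_top x
    exact hx (Subgroup.mem_bot.mp this)
  obtain ⟨N, ⟨hNnorm, hNbot⟩, hNmin⟩ := CPPO14.exists_minimal
    (fun H : Subgroup G => H.Normal ∧ H ≠ ⊥) (fun H => Nat.card H) ⟨⊤, htop⟩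
  have hnonsolv : ∀ M : Subgroup G, M.Normal → M ≠ ⊥ → ¬ IsSolvable M :=
    fun M hn hb hs => hb (hrad M hn hs)
  have hnoncomm : ∀ M : Subgroup G, M.Normal → M ≠ ⊥ →
      ∃ c d : G, c ∈ M ∧ d ∈ M ∧ c * d ≠ d * c := by
    intro M hn hb
    by_contra hall
    push_neg at hall
    refine hnonsolv M hn hb (isSolvable_of_comm ?_)
    intro a b
    exact Subtype.ext (hall a b a.2 b.2)
  have hminN : ∀ M : Subgroup G, M.Normal → M ≠ ⊥ → M ≤ N → M = N := fun M hn hb hle =>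
    Subgroup.eq_of_le_of_card_ge hle (hNmin M ⟨hn, hb⟩)
  -- the centralizer of N is trivial
  have hCnorm : (Subgroup.centralizer (N : Set G)).Normal := by
    constructor
    intro cc hcc g
    rw [Subgroup.mem_centralizer_iff] at hcc ⊢
    intro nn hnn
    have hn' : g⁻¹ * nn * g ∈ N := by
      have := hNnorm.conj_mem nn hnn g⁻¹
      simpa using this
    have h1 : (g⁻¹ * nn * g) * cc = cc * (g⁻¹ * nn * g) := hcc _ hn'
    have h2 := congrArg (fun z => g * z * g⁻¹) h1
    simp only [mul_assoc] at h2 ⊢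
    group at h2 ⊢
    exact h2
  have hcent : Subgroup.centralizer (N : Set G) = ⊥ := by
    by_contra hCbot
    set C := Subgroup.centralizer (N : Set G) with hCdef
    have hNC_norm : (N ⊓ C).Normal := by
      constructor
      intro x hx g
      rw [Subgroup.mem_inf] at hx ⊢
      exact ⟨hNnorm.conj_mem x hx.1 g, hCnorm.conj_mem x hx.2 g⟩
    have hNCsolv : IsSolvable (N ⊓ C : Subgroup G) := by
      refine isSolvable_of_comm ?_
      intro a b
      refine Subtype.ext ?_
      have haC : (a : G) ∈ C := (Subgroup.mem_inf.mp a.2).2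
      have hbN : (b : G) ∈ N := (Subgroup.mem_inf.mp b.2).1
      exact (Subgroup.mem_centralizer_iff.mp haC (b : G) hbN).symm
    have hNC : N ⊓ C = ⊥ := hrad _ hNC_norm hNCsolv
    obtain ⟨c, d, hc, hd, hcd⟩ := hnoncomm C hCnorm hCbot
    have hcommNC : ∀ x ∈ N, ∀ y ∈ C, x * y = y * x := by
      intro x hx y hy
      exact Subgroup.mem_centralizer_iff.mp hy x hx
    obtain ⟨p, hp, hcppoN⟩ := CPPO14.cross hcommNC hNC hCPPO hc hd hcd
    exact hnonsolv N hNnorm hNbot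
      (CPPO14.solvable_aux (Nat.card N) N rfl p hp hcppoN)
  -- every N-invariant subgroup of N is trivial or N
  have hInvClaim : ∀ T : Subgroup G, T ≤ N → (∀ n ∈ N, ∀ t ∈ T, n * t * n⁻¹ ∈ T) →
      T = ⊥ ∨ T = N := by
    intro T hTN hTinv
    by_cases hTbot : T = ⊥
    · exact Or.inl hTbot
    right
    set P : Subgroup G → Prop :=
      fun K => K ≤ N ∧ K ≠ ⊥ ∧ ∀ n ∈ N, ∀ t ∈ K, n * t * n⁻¹ ∈ K with hPdef
    obtain ⟨T₀, hT₀, hT₀min⟩ := CPPO14.exists_minimal P (fun K => Nat.card K)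
      ⟨T, hTN, hTbot, hTinv⟩
    suffices hT₀N : T₀ = N by
      refine Subgroup.eq_of_le_of_card_ge hTN ?_
      rw [← hT₀N]
      exact hT₀min T ⟨hTN, hTbot, hTinv⟩
    by_cases hconj : ∀ g : G, CPPO14.cjg g T₀ = T₀
    · -- T₀ is normal in G
      have hT₀norm : T₀.Normal := by
        constructor
        intro t ht g
        have : g * t * g⁻¹ ∈ CPPO14.cjg g T₀ := CPPO14.mem_cjg.mpr ⟨t, ht, rfl⟩
        rwa [hconj g] at this
      exact hminN T₀ hT₀norm hT₀.2.1 hT₀.1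
    · exfalso
      push_neg at hconj
      obtain ⟨g₀, hg₀⟩ := hconj
      have hP_cj : ∀ g : G, P (CPPO14.cjg g T₀) := by
        intro g
        refine ⟨?_, CPPO14.cjg_ne_bot hT₀.2.1 g, ?_⟩
        · intro x hx
          obtain ⟨t, ht, rfl⟩ := CPPO14.mem_cjg.mp hx
          exact hNnorm.conj_mem t (hT₀.1 ht) g
        · intro n hn x hx
          obtain ⟨t, ht, rfl⟩ := CPPO14.mem_cjg.mp hx
          have h1 : g⁻¹ * n * g ∈ N := by
            have := hNnorm.conj_mem n hn g⁻¹
            simpa using this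
          have h2 : (g⁻¹ * n * g) * t * (g⁻¹ * n * g)⁻¹ ∈ T₀ := hT₀.2.2 _ h1 t ht
          refine CPPO14.mem_cjg.mpr ⟨_, h2, ?_⟩
          group
      have hdisj : ∀ g h : G, CPPO14.cjg g T₀ ≠ CPPO14.cjg h T₀ →
          CPPO14.cjg g T₀ ⊓ CPPO14.cjg h T₀ = ⊥ := by
        intro g h hne
        by_contra hbot'
        have hPinf : P (CPPO14.cjg g T₀ ⊓ CPPO14.cjg h T₀) := by
          refine ⟨inf_le_left.trans (hP_cj g).1, hbot', ?_⟩
          intro n hn t ht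
          rw [Subgroup.mem_inf] at ht ⊢
          exact ⟨(hP_cj g).2.2 n hn t ht.1, (hP_cj h).2.2 n hn t ht.2⟩
        have h1 : Nat.card T₀ ≤ Nat.card (CPPO14.cjg g T₀ ⊓ CPPO14.cjg h T₀ : Subgroup G) :=
          hT₀min _ hPinf
        have h2 : CPPO14.cjg g T₀ ⊓ CPPO14.cjg h T₀ = CPPO14.cjg g T₀ := by
          refine Subgroup.eq_of_le_of_card_ge inf_le_left ?_
          rw [CPPO14.card_cjg]
          exact h1
        have h3 : CPPO14.cjg g T₀ ≤ CPPO14.cjg h T₀ := h2 ▸ inf_le_right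
        refine hne (Subgroup.eq_of_le_of_card_ge h3 ?_)
        rw [CPPO14.card_cjg, CPPO14.card_cjg]
      have hcomm_cj : ∀ g h : G, CPPO14.cjg g T₀ ≠ CPPO14.cjg h T₀ →
          ∀ x ∈ CPPO14.cjg g T₀, ∀ y ∈ CPPO14.cjg h T₀, x * y = y * x := by
        intro g h hne x hx y hy
        have hz1 : x⁻¹ * y⁻¹ * x * y ∈ CPPO14.cjg g T₀ := by
          have hyN : (y : G) ∈ N := (hP_cj h).1 hy
          have hyi : y⁻¹ * x * (y⁻¹)⁻¹ ∈ CPPO14.cjg g T₀ :=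
            (hP_cj g).2.2 y⁻¹ (inv_mem hyN) x hx
          rw [inv_inv] at hyi
          have := mul_mem (inv_mem hx) hyi
          simpa [mul_assoc] using this
        have hz2 : x⁻¹ * y⁻¹ * x * y ∈ CPPO14.cjg h T₀ := by
          have hxN : (x : G) ∈ N := (hP_cj g).1 hx
          have hxi : x⁻¹ * y⁻¹ * (x⁻¹)⁻¹ ∈ CPPO14.cjg h T₀ :=
            (hP_cj h).2.2 x⁻¹ (inv_mem hxN) y⁻¹ (inv_mem hy)
          rw [inv_inv] at hxi
          have := mul_mem hxi hy
          simpa [mul_assoc] using this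
        have hz : x⁻¹ * y⁻¹ * x * y ∈ (⊥ : Subgroup G) := by
          rw [← hdisj g h hne]
          exact Subgroup.mem_inf.mpr ⟨hz1, hz2⟩
        exact CPPO14.commute_of_commutator_eq_one (Subgroup.mem_bot.mp hz)
      have hT₀solv : IsSolvable T₀ := by
        by_cases hab : ∀ x ∈ T₀, ∀ y ∈ T₀, x * y = y * x
        · exact isSolvable_of_comm fun a b => Subtype.ext (hab a a.2 b b.2)
        · push_neg at hab
          obtain ⟨c, hc, d, hd, hcd⟩ := hab
          have hne1 : CPPO14.cjg 1 T₀ ≠ CPPO14.cjg g₀ T₀ := by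
            rw [CPPO14.cjg_one]
            exact fun h => hg₀ h.symm
          have hcomm' : ∀ x ∈ T₀, ∀ y ∈ CPPO14.cjg g₀ T₀, x * y = y * x := by
            intro x hx y hy
            refine hcomm_cj 1 g₀ hne1 x ?_ y hy
            rw [CPPO14.cjg_one]
            exact hx
          have hdisj' : T₀ ⊓ CPPO14.cjg g₀ T₀ = ⊥ := by
            have := hdisj 1 g₀ hne1
            rwa [CPPO14.cjg_one] at this
          have hc' : g₀ * c * g₀⁻¹ ∈ CPPO14.cjg g₀ T₀ := CPPO14.mem_cjg.mpr ⟨c, hc, rfl⟩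
          have hd' : g₀ * d * g₀⁻¹ ∈ CPPO14.cjg g₀ T₀ := CPPO14.mem_cjg.mpr ⟨d, hd, rfl⟩
          have hcd' : ¬ (g₀ * c * g₀⁻¹) * (g₀ * d * g₀⁻¹) =
              (g₀ * d * g₀⁻¹) * (g₀ * c * g₀⁻¹) := by
            intro hEq
            apply hcd
            have := congrArg (fun z => g₀⁻¹ * z * g₀) hEq
            simpa [mul_assoc] using this
          obtain ⟨p, hp, hcp⟩ := CPPO14.cross hcomm' hdisj' hCPPO hc' hd' hcd'
          exact CPPO14.solvable_aux (Nat.card T₀) T₀ rfl p hp hcp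
      -- the join of all conjugates of T₀ is a nontrivial solvable normal subgroup
      haveI : Fintype G := Fintype.ofFinite G
      set J : Subgroup G := ⨆ g : G, CPPO14.cjg g T₀ with hJdef
      have hJle : J ≤ N := iSup_le fun g => (hP_cj g).1
      have hT₀J : T₀ ≤ J := by
        have := le_iSup (fun g : G => CPPO14.cjg g T₀) 1
        rwa [CPPO14.cjg_one] at this
      have hJbot : J ≠ ⊥ := by
        intro h
        exact hT₀.2.1 (le_bot_iff.mp (h ▸ hT₀J))
      have hJnorm : J.Normal := by
        constructor
        intro x hx g
        have h1 : g * x * g⁻¹ ∈ J.map (MulAut.conj g).toMonoidHom := by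
          refine Subgroup.mem_map.mpr ⟨x, hx, ?_⟩
          simp [MulAut.conj_apply]
        have h2 : J.map (MulAut.conj g).toMonoidHom ≤ J := by
          show CPPO14.cjg g J ≤ J
          rw [hJdef]
          show CPPO14.cjg g (⨆ g' : G, CPPO14.cjg g' T₀) ≤ _
          unfold CPPO14.cjg
          rw [Subgroup.map_iSup]
          refine iSup_le fun g' => ?_
          show CPPO14.cjg g (CPPO14.cjg g' T₀) ≤ _
          rw [CPPO14.cjg_cjg]
          exact le_iSup (fun g'' : G => CPPO14.cjg g'' T₀) (g * g')
        exact h2 h1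
      have hJN : J = N := hminN J hJnorm hJbot hJle
      -- J is solvable
      set s : Finset (Subgroup G) := Finset.image (fun g => CPPO14.cjg g T₀) Finset.univ
        with hsdef
      have hsup : s.sup id = J := by
        rw [hsdef, Finset.sup_image]
        rw [hJdef]
        simp [Finset.sup_eq_iSup]
      have hssolv : IsSolvable (s.sup id : Subgroup G) := by
        refine CPPO14.solvable_finsetSup s ?_ ?_
        · intro K hK
          obtain ⟨g, _, rfl⟩ := Finset.mem_image.mp hK
          haveI : Group.IsSolvable T₀ := hT₀solv
          exact CPPO14.solvable_cjg g T₀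
        · intro K hK L hL hne x hx y hy
          obtain ⟨g, _, rfl⟩ := Finset.mem_image.mp hK
          obtain ⟨h, _, rfl⟩ := Finset.mem_image.mp hL
          exact hcomm_cj g h hne x hx y hy
      rw [hsup, hJN] at hssolv
      exact hnonsolv N hNnorm hNbot hssolv
  -- N is simple
  haveI hNnontriv : Nontrivial N := (Subgroup.nontrivial_iff_ne_bot N).mpr hNbot
  have hsimple : IsSimpleGroup N := by
    constructor
    intro H hH
    have hmaple : H.map N.subtype ≤ N := by
      intro x hx
      obtain ⟨h₀, _, rfl⟩ := Subgroup.mem_map.mp hx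
      exact h₀.2
    have hmapinv : ∀ n ∈ N, ∀ t ∈ H.map N.subtype, n * t * n⁻¹ ∈ H.map N.subtype := by
      intro n hn t ht
      obtain ⟨h₀, hh₀, rfl⟩ := Subgroup.mem_map.mp ht
      refine Subgroup.mem_map.mpr ⟨(⟨n, hn⟩ : N) * h₀ * (⟨n, hn⟩ : N)⁻¹,
        hH.conj_mem h₀ hh₀ ⟨n, hn⟩, ?_⟩
      simp
    rcases hInvClaim (H.map N.subtype) hmaple hmapinv with h1 | h1
    · left
      apply Subgroup.map_injective N.subtype_injective
      rw [h1, Subgroup.map_bot]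
    · right
      apply Subgroup.map_injective N.subtype_injective
      rw [h1]
      exact (N.range_subtype).symm.trans (MonoidHom.range_eq_map _)
  obtain ⟨a, b, ha, hb, hab⟩ := hnoncomm N hNnorm hNbot
  refine ⟨N, hNnorm, hsimple, ⟨⟨a, ha⟩, ⟨b, hb⟩, ?_⟩, hcent⟩
  intro h
  exact hab (by simpa using Subtype.ext_iff.mp h)
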